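/- Let B be a graph with no independent set of three vertices in any single connected component, in which any two non-adjacent vertices of B have at most one common neighbor, and suppose B contains an induced 5-cycle C inside some component B₁. Then B₁ is exactly the 5-cycle, i.e., V(B₁) = V(C). -/

import Mathlib

/-- `D` is an orientation of the simple graph `G`: every arc lies on an edge of `G`,
and every edge of `G` gets exactly one direction. -/
def IsOrientation {V : Type*} (G : SimpleGraph V) (D : V → V → Prop) : Prop :=
  (∀ u v, D u v → G.Adj u v) ∧ (∀ u v, G.Adj u v → (D u v ↔ ¬ D v u))

/-- The directed distance from `u` to `v` in the digraph `D` is at most 2. -/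
def DistLE2 {V : Type*} (D : V → V → Prop) (u v : V) : Prop :=
  D u v ∨ ∃ w, D u w ∧ D w v

/-- `D` is an orientation of the subgraph of `G` induced by `W`. -/
def IsOrientationOn {V : Type*} (G : SimpleGraph V) (W : Set V) (D : V → V → Prop) : Prop :=
  (∀ u v, D u v → u ∈ W ∧ v ∈ W ∧ G.Adj u v) ∧
  (∀ u v, u ∈ W → v ∈ W → G.Adj u v → (D u v ↔ ¬ D v u))

/-- If no component of `B` contains three independent vertices, any two non-adjacent
vertices of `B` have at most one common neighbor, and `B` contains an induced 5-cycle,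
then the component containing the 5-cycle is exactly the 5-cycle. -/
theorem stmt14 {V : Type*} [Fintype V] (B : SimpleGraph V)
    (hind : ∀ x y z : V, B.Reachable x y → B.Reachable x z →
      x ≠ y → x ≠ z → y ≠ z → ¬ B.Adj x y → ¬ B.Adj x z → ¬ B.Adj y z → False)
    (hcn : ∀ u v : V, u ≠ v → ¬ B.Adj u v →
      ∀ w₁ w₂, B.Adj u w₁ → B.Adj v w₁ → B.Adj u w₂ → B.Adj v w₂ → w₁ = w₂)
    (s : Fin 5 → V) (hs : Function.Injective s)
    (hcyc : ∀ i j : Fin 5, B.Adj (s i) (s j) ↔ (j = i + 1 ∨ i = j + 1)) :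
    ∀ v : V, B.Reachable (s 0) v → ∃ i, v = s i := by
  classical
  have key : ∀ (i : Fin 5) (v : V), (∀ j, v ≠ s j) → B.Adj (s i) v → False := by
    intro i v hv hadj
    have fadj : ∀ (x y : Fin 5), y = x + 1 → B.Adj (s (i+x)) (s (i+y)) := by
      intro x y h
      exact (hcyc _ _).mpr (Or.inl (by rw [h]; abel))
    have fnadj : ∀ (x y : Fin 5), y ≠ x + 1 → x ≠ y + 1 → ¬ B.Adj (s (i+x)) (s (i+y)) := by
      intro x y h1 h2 hA
      rcases (hcyc _ _).mp hA with h | h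
      · exact h1 (add_left_cancel (show i + y = i + (x+1) by rw [h]; abel))
      · exact h2 (add_left_cancel (show i + x = i + (y+1) by rw [h]; abel))
    have fne : ∀ (x y : Fin 5), x ≠ y → s (i+x) ≠ s (i+y) :=
      fun x y h e => h (add_left_cancel (hs e))
    have hadj0 : B.Adj (s (i+0)) v := by rw [add_zero]; exact hadj
    have hr0 : B.Reachable v (s (i+0)) := hadj0.symm.reachable
    have hr1 : B.Reachable v (s (i+1)) := hr0.trans (fadj 0 1 (by decide)).reachable
    have hr2 : B.Reachable v (s (i+2)) := hr1.trans (fadj 1 2 (by decide)).reachable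
    have hr3 : B.Reachable v (s (i+3)) := hr2.trans (fadj 2 3 (by decide)).reachable
    have hr4 : B.Reachable v (s (i+4)) := hr3.trans (fadj 3 4 (by decide)).reachable
    by_cases h2 : B.Adj v (s (i+2))
    · exact hv (i+1) ((hcn (s (i+0)) (s (i+2)) (fne 0 2 (by decide)) (fnadj 0 2 (by decide) (by decide))
        (s (i+1)) v (fadj 0 1 (by decide)) ((fadj 1 2 (by decide)).symm) hadj0 h2.symm).symm)
    by_cases h3 : B.Adj v (s (i+3))
    · exact hv (i+4) ((hcn (s (i+0)) (s (i+3)) (fne 0 3 (by decide)) (fnadj 0 3 (by decide) (by decide))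
        (s (i+4)) v ((fadj 4 0 (by decide)).symm) (fadj 3 4 (by decide)) hadj0 h3.symm).symm)
    have hb : B.Adj v (s (i+1)) := by
      by_contra hnb
      exact hind v (s (i+1)) (s (i+3)) hr1 hr3 (hv _) (hv _) (fne 1 3 (by decide)) hnb h3
        (fnadj 1 3 (by decide) (by decide))
    have he : B.Adj v (s (i+4)) := by
      by_contra hne'
      exact hind v (s (i+2)) (s (i+4)) hr2 hr4 (hv _) (hv _) (fne 2 4 (by decide)) h2 hne'
        (fnadj 2 4 (by decide) (by decide))
    exact hv (i+0) ((hcn (s (i+1)) (s (i+4)) (fne 1 4 (by decide)) (fnadj 1 4 (by decide) (by decide))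
      (s (i+0)) v ((fadj 0 1 (by decide)).symm) (fadj 4 0 (by decide)) hb.symm he.symm).symm)
  have main : ∀ (u w : V) (p : B.Walk u w), (∃ i, u = s i) → ∃ i, w = s i := by
    intro u w p
    induction p with
    | nil => exact id
    | @cons u x w h p ih =>
      rintro ⟨i, rfl⟩
      by_cases hx : ∃ j, x = s j
      · exact ih hx
      · push_neg at hx
        exact (key i x hx h).elim
  intro v hreach
  obtain ⟨p⟩ := hreach
  exact main _ _ p ⟨0, rfl⟩
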